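/- Let S' = K[x_1,...,x_r], S'' = K[x_{r+1},...,x_n], S = K[x_1,...,x_n], and let I = Q_1 ∩ ... ∩ Q_s (s ≥ 2) be the irredundant presentation of a monomial ideal I as an intersection of irreducible monomial ideals; set Q = Σ_{i=1}^s Q_i. For a proper subset τ ⊂ {1,...,s}, let S_τ = K[x_i : 1 ≤ i ≤ r, x_i ∉ Σ_{j∈τ}√Q_j] and M_τ = {monomials u of S' with u ∉ Σ_{j∈τ}Q_j} ∩ K[x_i : x_i ∈ Σ_{j∈τ}√Q_j]. Then as K-vector spaces, S = (⊕_{u monomial in S'∖Q} u·S'') ⊕ (⊕_{τ ⊊ [s]} ⊕_{w ∈ M_τ} ((∩_{j∈[s]∖τ} Q_j ∩ w·S_τ)·S_τ[x_{r+1},...,x_n])). -/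

import Mathlib

open MvPolynomial

/-- The `K`-span of the monomials with exponent vectors in `E`. -/
noncomputable def monSpan (K : Type*) [Field K] {n : ℕ} (E : Set (Fin n →₀ ℕ)) :
    Submodule K (MvPolynomial (Fin n) K) :=
  Submodule.span K ((fun d => monomial d (1 : K)) '' E)

/-- A monomial ideal is *irreducible* if it is generated by pure powers of variables with
positive exponents. -/
def IsPurePowerIdeal {K : Type*} [Field K] {n : ℕ}
    (Q : Ideal (MvPolynomial (Fin n) K)) : Prop :=
  ∃ (T : Finset (Fin n)) (a : Fin n → ℕ), (∀ i ∈ T, 0 < a i) ∧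
    Q = Ideal.span ((fun i => (X i : MvPolynomial (Fin n) K) ^ a i) '' (T : Set (Fin n)))

/-- The set of variables of `S_τ`: those `x_i` with `i ≤ r` and `x_i ∉ Σ_{j ∈ τ} √(Q j)`. -/
def Zvars {K : Type*} [Field K] {n s : ℕ} (r : ℕ)
    (Q : Fin s → Ideal (MvPolynomial (Fin n) K)) (τ : Finset (Fin s)) : Set (Fin n) :=
  {i | (i : ℕ) < r ∧ (X i : MvPolynomial (Fin n) K) ∉ ∑ j ∈ τ, (Q j).radical}

/-- The exponent vectors of the monomials of
`M_τ = {u ∈ Mon(S') | u ∉ Σ_{j ∈ τ} Q j} ∩ K[x_i : x_i ∈ Σ_{j ∈ τ} √(Q j)]`,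
where `S' = K[x_1, ..., x_r]`. -/
def Mexp {K : Type*} [Field K] {n s : ℕ} (r : ℕ)
    (Q : Fin s → Ideal (MvPolynomial (Fin n) K)) (τ : Finset (Fin s)) :
    Set (Fin n →₀ ℕ) :=
  {u | (u.support : Set (Fin n)) ⊆ {i | (i : ℕ) < r} ∧
    monomial u (1 : K) ∉ ∑ j ∈ τ, Q j ∧
    (u.support : Set (Fin n)) ⊆
      {i | (X i : MvPolynomial (Fin n) K) ∈ ∑ j ∈ τ, (Q j).radical}}

/-- The summand `u·S''` of the decomposition, for a monomial `u` of `S' \ Q`: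
the `K`-span of the monomials `u·v` with `v` a monomial of `S'' = K[x_{r+1}, ..., x_n]`. -/
noncomputable def uSummand {K : Type*} [Field K] {n : ℕ} (r : ℕ) (u : Fin n →₀ ℕ) :
    Submodule K (MvPolynomial (Fin n) K) :=
  monSpan K {d | ∃ e : Fin n →₀ ℕ, (e.support : Set (Fin n)) ⊆ {i | r ≤ (i : ℕ)} ∧ d = u + e}

/-- The summand `(⋂_{j ∈ [s] \ τ} Q j ∩ w·S_τ)·S_τ[x_{r+1}, ..., x_n]` of the
decomposition: the `K`-span of the monomials `m·v` where `m ∈ ⋂_{j ∉ τ} Q j`,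
`m ∈ w·S_τ` and `v` is a monomial of `S_τ[x_{r+1}, ..., x_n]`. -/
noncomputable def tauSummand {K : Type*} [Field K] {n s : ℕ} (r : ℕ)
    (Q : Fin s → Ideal (MvPolynomial (Fin n) K)) (τ : Finset (Fin s)) (w : Fin n →₀ ℕ) :
    Submodule K (MvPolynomial (Fin n) K) :=
  monSpan K {d | ∃ m v : Fin n →₀ ℕ, d = m + v ∧
    monomial m (1 : K) ∈ (⨅ j ∈ τᶜ, Q j) ∧
    (∃ e : Fin n →₀ ℕ, (e.support : Set (Fin n)) ⊆ Zvars r Q τ ∧ m = w + e) ∧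
    (v.support : Set (Fin n)) ⊆ Zvars r Q τ ∪ {i | r ≤ (i : ℕ)}}

/-! ### Auxiliary lemmas -/

lemma monSpan_eq_supported (K : Type*) [Field K] {n : ℕ} (E : Set (Fin n →₀ ℕ)) :
    monSpan K E = MvPolynomial.restrictSupport K E := by
  rw [MvPolynomial.restrictSupport_eq_span]
  rfl

lemma monSpan_mono {K : Type*} [Field K] {n : ℕ} {E₁ E₂ : Set (Fin n →₀ ℕ)} (h : E₁ ⊆ E₂) :
    monSpan K E₁ ≤ monSpan K E₂ := by
  rw [monSpan_eq_supported, monSpan_eq_supported]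
  exact MvPolynomial.restrictSupport_mono K h

lemma monSpan_disjoint {K : Type*} [Field K] {n : ℕ} {E₁ E₂ : Set (Fin n →₀ ℕ)}
    (h : Disjoint E₁ E₂) : Disjoint (monSpan K E₁) (monSpan K E₂) := by
  rw [monSpan_eq_supported, monSpan_eq_supported]
  rw [Submodule.disjoint_def]
  intro x h1 h2
  rw [MvPolynomial.mem_restrictSupport_iff] at h1 h2
  exact MvPolynomial.support_eq_empty.1 (Finset.eq_empty_of_forall_notMem fun m hm =>
    Set.disjoint_left.1 h (h1 hm) (h2 hm))

lemma monSpan_iUnion {K : Type*} [Field K] {n : ℕ} {ι : Type*} (E : ι → Set (Fin n →₀ ℕ)) :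
    monSpan K (⋃ i, E i) = ⨆ i, monSpan K (E i) := by
  simp only [monSpan, Set.image_iUnion, Submodule.span_iUnion]

lemma monSpan_univ (K : Type*) [Field K] {n : ℕ} :
    monSpan K (Set.univ : Set (Fin n →₀ ℕ)) = ⊤ := by
  rw [monSpan_eq_supported]
  exact MvPolynomial.restrictSupport_univ K

section aux
variable {K : Type*} [Field K] {n s : ℕ}
variable (T : Fin s → Finset (Fin n)) (a : Fin s → Fin n → ℕ)
  (Q : Fin s → Ideal (MvPolynomial (Fin n) K))

lemma idealSum_eq_biSup (τ : Finset (Fin s)) : (∑ j ∈ τ, Q j) = ⨆ j ∈ τ, Q j := by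
  classical
  induction τ using Finset.induction with
  | empty => simp
  | insert _ _ h ih =>
    rw [Finset.sum_insert h, Finset.iSup_insert, ← ih, Submodule.add_eq_sup]

variable (hpos : ∀ j, ∀ i ∈ T j, 0 < a j i)
  (hQ : ∀ j, Q j = Ideal.span ((fun i => (X i : MvPolynomial (Fin n) K) ^ a j i)
    '' (T j : Set (Fin n))))

include hQ in
lemma Q_eq_span_monomial (j : Fin s) :
    Q j = Ideal.span ((fun d => monomial d (1 : K)) ''
      ((fun i => Finsupp.single i (a j i)) '' (T j : Set (Fin n)))) := by
  rw [hQ j, Set.image_image]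
  simp [X_pow_eq_monomial]

include hQ in
lemma sumQ_eq_span (τ : Finset (Fin s)) :
    (∑ j ∈ τ, Q j) = Ideal.span ((fun d => monomial d (1 : K)) ''
      (⋃ j ∈ τ, ((fun i => Finsupp.single i (a j i)) '' (T j : Set (Fin n))))) := by
  rw [idealSum_eq_biSup]
  rw [Set.image_iUnion₂, Ideal.span_iUnion]
  simp_rw [Ideal.span_iUnion]
  exact iSup_congr fun j => iSup_congr fun _ => Q_eq_span_monomial T a Q hQ j

include hQ in
lemma mem_sumQ_iff (τ : Finset (Fin s)) (d : Fin n →₀ ℕ) :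
    monomial d (1 : K) ∈ (∑ j ∈ τ, Q j) ↔ ∃ j ∈ τ, ∃ i ∈ T j, a j i ≤ d i := by
  classical
  rw [sumQ_eq_span T a Q hQ τ, mem_ideal_span_monomial_image]
  have hsupp : (monomial d (1:K)).support = {d} := by rw [support_monomial, if_neg one_ne_zero]
  simp only [hsupp, Finset.mem_singleton]
  constructor
  · intro h
    obtain ⟨si, hsi, hle⟩ := h d rfl
    simp only [Set.mem_iUnion, Set.mem_image] at hsi
    obtain ⟨j, hj, i, hi, rfl⟩ := hsi
    exact ⟨j, hj, i, hi, (Finsupp.single_le_iff).1 hle⟩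
  · rintro ⟨j, hj, i, hi, hle⟩ xi rfl
    refine ⟨Finsupp.single i (a j i), ?_, (Finsupp.single_le_iff).2 hle⟩
    simp only [Set.mem_iUnion, Set.mem_image]
    exact ⟨j, hj, i, hi, rfl⟩

include hQ in
lemma mem_Q_iff (j : Fin s) (d : Fin n →₀ ℕ) :
    monomial d (1 : K) ∈ Q j ↔ ∃ i ∈ T j, a j i ≤ d i := by
  have := mem_sumQ_iff T a Q hQ {j} d
  simp only [Finset.sum_singleton, Finset.mem_singleton] at this
  simpa using this

include hpos hQ in
lemma X_mem_sum_radical_iff (τ : Finset (Fin s)) (i : Fin n) :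
    (X i : MvPolynomial (Fin n) K) ∈ (∑ j ∈ τ, (Q j).radical) ↔ ∃ j ∈ τ, i ∈ T j := by
  constructor
  · intro h
    have hle : (∑ j ∈ τ, (Q j).radical) ≤ (∑ j ∈ τ, Q j).radical := by
      rw [idealSum_eq_biSup, idealSum_eq_biSup]
      exact iSup₂_le fun j hj => Ideal.radical_mono (le_iSup₂ (f := fun j _ => Q j) j hj)
    obtain ⟨k, hk⟩ := hle h
    classical
    rw [sumQ_eq_span T a Q hQ τ, mem_ideal_span_monomial_image] at hk
    rw [X_pow_eq_monomial] at hk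
    have hsupp : (monomial (Finsupp.single i k) (1:K)).support = {Finsupp.single i k} := by
      rw [support_monomial, if_neg one_ne_zero]
    simp only [hsupp, Finset.mem_singleton] at hk
    obtain ⟨si, hsi, hle'⟩ := hk _ rfl
    simp only [Set.mem_iUnion, Set.mem_image] at hsi
    obtain ⟨j, hj, i', hi', rfl⟩ := hsi
    rw [Finsupp.single_le_iff] at hle'
    by_cases hii : i' = i
    · exact ⟨j, hj, hii ▸ hi'⟩
    · rw [Finsupp.single_apply, if_neg (fun h => hii h.symm)] at hle'
      exact absurd hle' (by simpa using (hpos j i' hi').ne')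
  · rintro ⟨j, hj, hi⟩
    have h1 : (X i : MvPolynomial (Fin n) K) ∈ (Q j).radical := by
      refine ⟨a j i, ?_⟩
      rw [hQ j]
      exact Ideal.subset_span ⟨i, hi, rfl⟩
    have h2 : (Q j).radical ≤ ∑ j ∈ τ, (Q j).radical := by
      rw [idealSum_eq_biSup]
      exact le_iSup₂ (f := fun j _ => (Q j).radical) j hj
    exact h2 h1

include hpos hQ in
lemma Zvars_eq (r : ℕ) (τ : Finset (Fin s)) :
    Zvars r Q τ = {i : Fin n | (i : ℕ) < r ∧ i ∉ τ.biUnion T} := by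
  ext i
  simp only [Zvars, Set.mem_setOf_eq, X_mem_sum_radical_iff T a Q hpos hQ,
    Finset.mem_biUnion]

include hQ in
lemma mem_iInf_compl_iff (τ : Finset (Fin s)) (m : Fin n →₀ ℕ) :
    monomial m (1 : K) ∈ (⨅ j ∈ τᶜ, Q j) ↔ ∀ j ∉ τ, ∃ i ∈ T j, a j i ≤ m i := by
  simp only [Submodule.mem_iInf, Finset.mem_compl, mem_Q_iff T a Q hQ]

-- C1
lemma uSet_eq (r : ℕ) (u : Fin n →₀ ℕ)
    (hu : (u.support : Set (Fin n)) ⊆ {i | (i : ℕ) < r}) :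
    {d : Fin n →₀ ℕ | ∃ e : Fin n →₀ ℕ, (e.support : Set (Fin n)) ⊆ {i | r ≤ (i : ℕ)} ∧ d = u + e}
      = {d | Finsupp.filter (fun i : Fin n => (i : ℕ) < r) d = u} := by
  ext d
  constructor
  · rintro ⟨e, he, rfl⟩
    rw [Set.mem_setOf_eq, Finsupp.filter_add]
    have h1 : Finsupp.filter (fun i : Fin n => (i : ℕ) < r) u = u :=
      (Finsupp.filter_eq_self_iff _ _).2 fun i hi => hu (Finsupp.mem_support_iff.2 hi)
    have h2 : Finsupp.filter (fun i : Fin n => (i : ℕ) < r) e = 0 :=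
      (Finsupp.filter_eq_zero_iff _ _).2 fun i hir => by
        by_contra h
        exact absurd hir (Nat.not_lt.2 (he (Finsupp.mem_support_iff.2 h)))
    rw [h1, h2, add_zero]
  · intro h
    refine ⟨Finsupp.filter (fun i : Fin n => ¬ (i : ℕ) < r) d, ?_, ?_⟩
    · intro i hi
      simp only [Finsupp.support_filter, Finset.coe_filter, Set.mem_setOf_eq,
        Finset.mem_coe, Finset.mem_filter] at hi ⊢
      exact Nat.le_of_not_lt hi.2
    · rw [← h, Finsupp.filter_pos_add_filter_neg]

-- C2
include hpos hQ in
lemma tauSet_eq (r : ℕ) (τ : Finset (Fin s)) (w : Fin n →₀ ℕ) (hw : w ∈ Mexp r Q τ) :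
    {d : Fin n →₀ ℕ | ∃ m v : Fin n →₀ ℕ, d = m + v ∧
      monomial m (1 : K) ∈ (⨅ j ∈ τᶜ, Q j) ∧
      (∃ e : Fin n →₀ ℕ, (e.support : Set (Fin n)) ⊆ Zvars r Q τ ∧ m = w + e) ∧
      (v.support : Set (Fin n)) ⊆ Zvars r Q τ ∪ {i | r ≤ (i : ℕ)}}
    = {d | Finsupp.filter (fun i : Fin n => (i : ℕ) < r ∧ i ∈ τ.biUnion T) d = w ∧
        ∀ j ∉ τ, ∃ i ∈ T j, a j i ≤ Finsupp.filter (fun i : Fin n => (i : ℕ) < r) d i} := by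
  classical
  obtain ⟨hw1, hw2, hw3⟩ := hw
  have hZ := Zvars_eq T a Q hpos hQ r τ
  ext d
  constructor
  · rintro ⟨m, v, rfl, hm, ⟨e, he, rfl⟩, hv⟩
    constructor
    · rw [Finsupp.filter_add, Finsupp.filter_add]
      have h1 : Finsupp.filter (fun i : Fin n => (i : ℕ) < r ∧ i ∈ τ.biUnion T) w = w := by
        refine (Finsupp.filter_eq_self_iff _ _).2 fun i hi => ?_
        have hi' : i ∈ w.support := Finsupp.mem_support_iff.2 hi
        refine ⟨hw1 hi', ?_⟩
        have := hw3 hi'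
        rw [Set.mem_setOf_eq, X_mem_sum_radical_iff T a Q hpos hQ] at this
        exact Finset.mem_biUnion.2 this
      have h2 : Finsupp.filter (fun i : Fin n => (i : ℕ) < r ∧ i ∈ τ.biUnion T) e = 0 := by
        refine (Finsupp.filter_eq_zero_iff _ _).2 fun i hip => ?_
        by_contra h
        have := he (Finsupp.mem_support_iff.2 h)
        rw [hZ] at this
        exact this.2 hip.2
      have h3 : Finsupp.filter (fun i : Fin n => (i : ℕ) < r ∧ i ∈ τ.biUnion T) v = 0 := by
        refine (Finsupp.filter_eq_zero_iff _ _).2 fun i hip => ?_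
        by_contra h
        rcases hv (Finsupp.mem_support_iff.2 h) with hiv | hiv
        · rw [hZ] at hiv; exact hiv.2 hip.2
        · exact absurd hip.1 (Nat.not_lt.2 hiv)
      rw [h1, h2, h3, add_zero, add_zero]
    · intro j hj
      rw [mem_iInf_compl_iff T a Q hQ] at hm
      obtain ⟨i, hi, hle⟩ := hm j hj
      refine ⟨i, hi, ?_⟩
      have hpos' : 0 < (w + e) i := lt_of_lt_of_le (hpos j i hi) hle
      have hir : (i : ℕ) < r := by
        by_cases hwi : w i = 0
        · have hei : e i ≠ 0 := by
            intro h0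
            rw [Finsupp.add_apply, hwi, h0] at hpos'
            exact lt_irrefl 0 hpos'
          have := he (Finsupp.mem_support_iff.2 hei)
          rw [hZ] at this
          exact this.1
        · exact hw1 (Finsupp.mem_support_iff.2 hwi)
      rw [Finsupp.filter_apply_pos (fun i : Fin n => (i : ℕ) < r) (w + e + v) hir]
      calc a j i ≤ (w + e) i := hle
        _ ≤ (w + e) i + v i := Nat.le_add_right _ _
        _ = (w + e + v) i := rfl
  · rintro ⟨h1, h2⟩
    refine ⟨Finsupp.filter (fun i : Fin n => (i : ℕ) < r) d,
      Finsupp.filter (fun i : Fin n => ¬ (i : ℕ) < r) d, ?_, ?_, ?_, ?_⟩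
    · rw [Finsupp.filter_pos_add_filter_neg]
    · rw [mem_iInf_compl_iff T a Q hQ]
      exact h2
    · refine ⟨Finsupp.filter (fun i : Fin n => (i : ℕ) < r ∧ i ∉ τ.biUnion T) d, ?_, ?_⟩
      · intro i hi
        simp only [Finsupp.support_filter, Finset.coe_filter, Set.mem_setOf_eq,
          Finset.mem_coe, Finset.mem_filter] at hi
        rw [hZ]
        exact ⟨hi.2.1, hi.2.2⟩
      · rw [← h1]
        ext i
        simp only [Finsupp.add_apply, Finsupp.filter_apply]
        by_cases hir : (i : ℕ) < r
        · by_cases hib : i ∈ τ.biUnion T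
          · simp [hir, hib]
          · simp [hir, hib]
        · simp [hir]
    · intro i hi
      simp only [Finsupp.support_filter, Finset.coe_filter, Set.mem_setOf_eq,
        Finset.mem_coe, Finset.mem_filter] at hi
      exact Or.inr (Nat.le_of_not_lt hi.2)

end aux

/-! ### The exponent sets of the decomposition -/

/-- The exponent set of each summand, in canonical "filter" form. -/
def Eset {K : Type*} [Field K] {n s : ℕ} (r : ℕ) (T : Fin s → Finset (Fin n))
    (a : Fin s → Fin n → ℕ) (Q : Fin s → Ideal (MvPolynomial (Fin n) K)) :
    ({u : Fin n →₀ ℕ // (u.support : Set (Fin n)) ⊆ {i | (i : ℕ) < r} ∧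
        monomial u (1 : K) ∉ ∑ j, Q j} ⊕
      (Σ τ : {τ : Finset (Fin s) // τ ≠ Finset.univ}, {w // w ∈ Mexp r Q τ.1})) →
    Set (Fin n →₀ ℕ)
  | Sum.inl u => {d | Finsupp.filter (fun i : Fin n => (i : ℕ) < r) d = u.1}
  | Sum.inr p => {d | Finsupp.filter (fun i : Fin n => (i : ℕ) < r ∧ i ∈ p.1.1.biUnion T) d
        = p.2.1 ∧
      ∀ j ∉ p.1.1, ∃ i ∈ T j, a j i ≤ Finsupp.filter (fun i : Fin n => (i : ℕ) < r) d i}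

section main
variable {K : Type*} [Field K] {n s : ℕ}
variable (T : Fin s → Finset (Fin n)) (a : Fin s → Fin n → ℕ)
  (Q : Fin s → Ideal (MvPolynomial (Fin n) K))
variable (hpos : ∀ j, ∀ i ∈ T j, 0 < a j i)
  (hQ : ∀ j, Q j = Ideal.span ((fun i => (X i : MvPolynomial (Fin n) K) ^ a j i)
    '' (T j : Set (Fin n))))

include hpos hQ in
lemma Eset_inr_tau_eq (r : ℕ)
    (p : Σ τ : {τ : Finset (Fin s) // τ ≠ Finset.univ}, {w // w ∈ Mexp r Q τ.1})
    (d : Fin n →₀ ℕ) (hd : d ∈ Eset r T a Q (Sum.inr p)) (j : Fin s) :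
    j ∈ p.1.1 ↔ ¬ ∃ i ∈ T j, a j i ≤ Finsupp.filter (fun i : Fin n => (i : ℕ) < r) d i := by
  obtain ⟨⟨τ, hτ⟩, ⟨w, hw⟩⟩ := p
  obtain ⟨hd1, hd2⟩ := hd
  dsimp only at hd1 hd2
  constructor
  · rintro hjτ ⟨i, hi, hle⟩
    have hir : (i : ℕ) < r := by
      by_contra h
      rw [Finsupp.filter_apply_neg (fun i : Fin n => (i : ℕ) < r) d h] at hle
      exact absurd hle (by simpa using (hpos j i hi).ne')
    have hPA : (i : ℕ) < r ∧ i ∈ τ.biUnion T := ⟨hir, Finset.mem_biUnion.2 ⟨j, hjτ, hi⟩⟩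
    have hwi : a j i ≤ w i := by
      rw [← hd1, Finsupp.filter_apply_pos _ d hPA]
      rwa [Finsupp.filter_apply_pos (fun i : Fin n => (i : ℕ) < r) d hir] at hle
    have hw2 := hw.2.1
    rw [mem_sumQ_iff T a Q hQ] at hw2
    exact hw2 ⟨j, hjτ, i, hi, hwi⟩
  · intro h
    by_contra hjτ
    exact h (hd2 j hjτ)

include hpos hQ in
lemma Eset_uniq (r : ℕ) (d : Fin n →₀ ℕ) (i₁ i₂) (h₁ : d ∈ Eset r T a Q i₁)
    (h₂ : d ∈ Eset r T a Q i₂) : i₁ = i₂ := by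
  have hexcl : ∀ u p, d ∈ Eset r T a Q (Sum.inl u) → d ∈ Eset r T a Q (Sum.inr p) → False := by
    rintro ⟨u, hu1, hu2⟩ ⟨⟨τ, hτ⟩, ⟨w, hw⟩⟩ hd1 ⟨hd2, hd3⟩
    obtain ⟨j, hjτ⟩ : ∃ j, j ∉ τ := by
      by_contra h
      push_neg at h
      exact hτ (Finset.eq_univ_iff_forall.2 h)
    have hex := hd3 j hjτ
    have hd1' : Finsupp.filter (fun i : Fin n => (i : ℕ) < r) d = u := hd1
    rw [hd1'] at hex
    rw [mem_sumQ_iff T a Q hQ] at hu2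
    exact hu2 ⟨j, Finset.mem_univ j, hex⟩
  match i₁, i₂ with
  | Sum.inl u₁, Sum.inl u₂ =>
    exact congrArg Sum.inl (Subtype.ext ((h₁ : _ = u₁.1).symm.trans (h₂ : _ = u₂.1)))
  | Sum.inl u₁, Sum.inr p₂ => exact (hexcl u₁ p₂ h₁ h₂).elim
  | Sum.inr p₁, Sum.inl u₂ => exact (hexcl u₂ p₁ h₂ h₁).elim
  | Sum.inr p₁, Sum.inr p₂ =>
    obtain ⟨⟨τ₁, hτ₁⟩, ⟨w₁, hw₁⟩⟩ := p₁
    obtain ⟨⟨τ₂, hτ₂⟩, ⟨w₂, hw₂⟩⟩ := p₂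
    have hττ : τ₁ = τ₂ := by
      ext j
      rw [Eset_inr_tau_eq T a Q hpos hQ r ⟨⟨τ₁, hτ₁⟩, ⟨w₁, hw₁⟩⟩ d h₁ j,
        Eset_inr_tau_eq T a Q hpos hQ r ⟨⟨τ₂, hτ₂⟩, ⟨w₂, hw₂⟩⟩ d h₂ j]
    subst hττ
    have hww : w₁ = w₂ := h₁.1.symm.trans h₂.1
    subst hww
    rfl

include hpos hQ in
lemma exists_mem_Eset (r : ℕ) (d : Fin n →₀ ℕ) : ∃ idx, d ∈ Eset r T a Q idx := by
  classical
  by_cases hall : ∀ j, ¬ ∃ i ∈ T j, a j i ≤ Finsupp.filter (fun i : Fin n => (i : ℕ) < r) d i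
  · refine ⟨Sum.inl ⟨Finsupp.filter (fun i : Fin n => (i : ℕ) < r) d, ?_, ?_⟩, rfl⟩
    · intro i hi
      simp only [Finsupp.support_filter, Finset.coe_filter, Set.mem_setOf_eq,
        Finset.mem_coe, Finset.mem_filter] at hi ⊢
      exact hi.2
    · rw [mem_sumQ_iff T a Q hQ]
      rintro ⟨j, _, hex⟩
      exact hall j hex
  · push_neg at hall
    set τ : Finset (Fin s) := Finset.univ.filter
      (fun j => ¬ ∃ i ∈ T j, a j i ≤ Finsupp.filter (fun i : Fin n => (i : ℕ) < r) d i)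
      with hτdef
    have hτne : τ ≠ Finset.univ := by
      obtain ⟨j₀, hj₀⟩ := hall
      intro h
      have hj : j₀ ∈ τ := h ▸ Finset.mem_univ j₀
      rw [hτdef, Finset.mem_filter] at hj
      exact hj.2 hj₀
    have hwile : ∀ i, Finsupp.filter (fun i : Fin n => (i : ℕ) < r ∧ i ∈ τ.biUnion T) d i
        ≤ Finsupp.filter (fun i : Fin n => (i : ℕ) < r) d i := by
      intro i
      simp only [Finsupp.filter_apply]
      split_ifs with h1 h2 h2
      · exact le_refl _
      · exact absurd h1.1 h2
      · exact Nat.zero_le _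
      · exact le_refl _
    have hwmem : Finsupp.filter (fun i : Fin n => (i : ℕ) < r ∧ i ∈ τ.biUnion T) d
        ∈ Mexp r Q τ := by
      refine ⟨?_, ?_, ?_⟩
      · intro i hi
        simp only [Finsupp.support_filter, Finset.coe_filter, Set.mem_setOf_eq,
          Finset.mem_coe, Finset.mem_filter] at hi ⊢
        exact hi.2.1
      · rw [mem_sumQ_iff T a Q hQ]
        rintro ⟨j, hj, i, hi, hle⟩
        rw [hτdef, Finset.mem_filter] at hj
        exact hj.2 ⟨i, hi, le_trans hle (hwile i)⟩
      · intro i hi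
        simp only [Finsupp.support_filter, Finset.coe_filter, Set.mem_setOf_eq,
          Finset.mem_coe, Finset.mem_filter] at hi
        rw [Set.mem_setOf_eq, X_mem_sum_radical_iff T a Q hpos hQ]
        exact Finset.mem_biUnion.1 hi.2.2
    refine ⟨Sum.inr ⟨⟨τ, hτne⟩, ⟨_, hwmem⟩⟩, rfl, ?_⟩
    intro j hj
    have hj' : j ∉ τ := hj
    rw [hτdef, Finset.mem_filter] at hj'
    push_neg at hj'
    exact hj' (Finset.mem_univ j)

end main

/-! ### The main theorem -/

theorem S_decomposition {K : Type*} [Field K] {n s : ℕ} (r : ℕ) (hr : r ≤ n) (hs : 2 ≤ s)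
    (Q : Fin s → Ideal (MvPolynomial (Fin n) K))
    (hirr : ∀ j, IsPurePowerIdeal (Q j))
    (hirred : ∀ i : Fin s, (⨅ j ∈ Finset.univ.erase i, Q j) ≠ ⨅ j, Q j)
    (F : ({u : Fin n →₀ ℕ // (u.support : Set (Fin n)) ⊆ {i | (i : ℕ) < r} ∧
            monomial u (1 : K) ∉ ∑ j, Q j} ⊕
          (Σ τ : {τ : Finset (Fin s) // τ ≠ Finset.univ}, {w // w ∈ Mexp r Q τ.1})) →
      Submodule K (MvPolynomial (Fin n) K))
    (hF₁ : ∀ u, F (Sum.inl u) = uSummand r u.1)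
    (hF₂ : ∀ p, F (Sum.inr p) = tauSummand r Q p.1.1 p.2.1) :
    iSupIndep F ∧ (⨆ i, F i) = ⊤ := by
  classical
  choose T a hpos hQ using hirr
  have hFE : ∀ idx, F idx = monSpan K (Eset r T a Q idx) := by
    rintro (u | p)
    · rw [hF₁]
      unfold uSummand
      congr 1
      exact uSet_eq r u.1 u.2.1
    · rw [hF₂]
      unfold tauSummand
      congr 1
      exact tauSet_eq T a Q hpos hQ r p.1.1 p.2.1 p.2.2
  constructor
  · rw [iSupIndep_def]
    intro i
    have hle : (⨆ (j) (_ : j ≠ i), F j) ≤ monSpan K (⋃ (j) (_ : j ≠ i), Eset r T a Q j) := by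
      refine iSup₂_le fun j hj => ?_
      rw [hFE j]
      exact monSpan_mono (Set.subset_iUnion₂ (s := fun j _ => Eset r T a Q j) j hj)
    rw [hFE i]
    refine Disjoint.mono_right hle (monSpan_disjoint ?_)
    rw [Set.disjoint_left]
    intro d hdi hdj
    simp only [Set.mem_iUnion] at hdj
    obtain ⟨j, hj, hdj⟩ := hdj
    exact hj (Eset_uniq T a Q hpos hQ r d j i hdj hdi)
  · have huniv : ⋃ idx, Eset r T a Q idx = Set.univ := by
      rw [Set.eq_univ_iff_forall]
      intro d
      obtain ⟨idx, h⟩ := exists_mem_Eset T a Q hpos hQ r d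
      exact Set.mem_iUnion.2 ⟨idx, h⟩
    calc ⨆ idx, F idx = ⨆ idx, monSpan K (Eset r T a Q idx) := by simp_rw [hFE]
      _ = monSpan K (⋃ idx, Eset r T a Q idx) := (monSpan_iUnion _).symm
      _ = ⊤ := by rw [huniv, monSpan_univ]
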